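/- Let x, y, z be rational numbers such that each of x, y, z is either 0 or the reciprocal of a nonzero integer, and x + y + z = 1. Then, as an unordered triple, {x, y, z} is one of: {1, 1/n, −1/n} for some integer n ≥ 1; {1, 0, 0}; {1/2, 1/2, 0}; {1/2, 1/3, 1/6}; {1/2, 1/4, 1/4}; {1/3, 1/3, 1/3}. -/

import Mathlib

private lemma key18 (x y z : ℚ) (hzy : z ≤ y) (hyx : y ≤ x)
    (hx : x = 0 ∨ ∃ n : ℤ, n ≠ 0 ∧ x = 1 / (n : ℚ))
    (hy : y = 0 ∨ ∃ n : ℤ, n ≠ 0 ∧ y = 1 / (n : ℚ))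
    (hz : z = 0 ∨ ∃ n : ℤ, n ≠ 0 ∧ z = 1 / (n : ℚ))
    (hsum : x + y + z = 1) :
    (∃ n : ℤ, 1 ≤ n ∧
      ({x, y, z} : Multiset ℚ) = {1, 1 / (n : ℚ), -(1 / (n : ℚ))}) ∨
    ({x, y, z} : Multiset ℚ) = {1, 0, 0} ∨
    ({x, y, z} : Multiset ℚ) = {1/2, 1/2, 0} ∨
    ({x, y, z} : Multiset ℚ) = {1/2, 1/3, 1/6} ∨
    ({x, y, z} : Multiset ℚ) = {1/2, 1/4, 1/4} ∨
    ({x, y, z} : Multiset ℚ) = {1/3, 1/3, 1/3} := by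
  have hx3 : (1:ℚ)/3 ≤ x := by linarith
  have hxpos : 0 < x := by linarith
  obtain ⟨a, ha0, hxa⟩ : ∃ n : ℤ, n ≠ 0 ∧ x = 1 / (n : ℚ) := by
    rcases hx with h | h
    · exfalso; linarith
    · exact h
  have haQ : ((a:ℚ)) ≠ 0 := Int.cast_ne_zero.mpr ha0
  have hapos : 0 < a := by
    by_contra h
    push_neg at h
    have : (a:ℚ) < 0 := by
      have : (a:ℚ) ≤ 0 := by exact_mod_cast h
      rcases lt_or_eq_of_le this with h' | h'
      · exact h'
      · exact absurd h' haQ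
    have : x < 0 := by rw [hxa]; exact div_neg_of_pos_of_neg one_pos this
    linarith
  have haQpos : (0:ℚ) < (a:ℚ) := by exact_mod_cast hapos
  have hxa' : x * a = 1 := by rw [hxa]; field_simp
  have ha3 : a ≤ 3 := by
    have : (a:ℚ) ≤ 3 := by nlinarith
    exact_mod_cast this
  have ha1 : 1 ≤ a := hapos
  interval_cases a
  · -- a = 1, x = 1
    have hx1 : x = 1 := by norm_num at hxa; exact hxa
    have hyz : y + z = 0 := by linarith
    have hy0 : 0 ≤ y := by linarith
    rcases hy with hy' | ⟨b, hb0, hyb⟩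
    · right; left
      have hz0 : z = 0 := by linarith
      rw [hx1, hy', hz0]
    · left
      have hbQ : ((b:ℚ)) ≠ 0 := Int.cast_ne_zero.mpr hb0
      have hypos : 0 < y := by
        rcases lt_or_eq_of_le hy0 with h | h
        · exact h
        · exfalso; apply hbQ; rw [hyb] at h; field_simp at h; simp at h
      have hbpos : 0 < b := by
        by_contra h
        push_neg at h
        have hb : (b:ℚ) < 0 := by
          have : (b:ℚ) ≤ 0 := by exact_mod_cast h
          rcases lt_or_eq_of_le this with h' | h'
          · exact h'
          · exact absurd h' hbQ
        have : y < 0 := by rw [hyb]; exact div_neg_of_pos_of_neg one_pos hb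
        linarith
      refine ⟨b, hbpos, ?_⟩
      have hzb : z = -(1/(b:ℚ)) := by rw [← hyb]; linarith
      rw [hx1, hyb, hzb]
  · -- a = 2
    have hx2 : x = 1/2 := by norm_num at hxa; linarith
    have hyz : y + z = 1/2 := by linarith
    have hy4 : (1:ℚ)/4 ≤ y := by linarith
    have hypos : 0 < y := by linarith
    obtain ⟨b, hb0, hyb⟩ : ∃ n : ℤ, n ≠ 0 ∧ y = 1 / (n : ℚ) := by
      rcases hy with h | h
      · exfalso; linarith
      · exact h
    have hbQ : ((b:ℚ)) ≠ 0 := Int.cast_ne_zero.mpr hb0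
    have hbpos : 0 < b := by
      by_contra h
      push_neg at h
      have hb : (b:ℚ) < 0 := by
        have : (b:ℚ) ≤ 0 := by exact_mod_cast h
        rcases lt_or_eq_of_le this with h' | h'
        · exact h'
        · exact absurd h' hbQ
      have : y < 0 := by rw [hyb]; exact div_neg_of_pos_of_neg one_pos hb
      linarith
    have hbQpos : (0:ℚ) < (b:ℚ) := by exact_mod_cast hbpos
    have hyb' : y * b = 1 := by rw [hyb]; field_simp
    have hb4 : b ≤ 4 := by
      have : (b:ℚ) ≤ 4 := by nlinarith
      exact_mod_cast this
    have hb2 : 2 ≤ b := by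
      have : (2:ℚ) ≤ (b:ℚ) := by nlinarith
      exact_mod_cast this
    interval_cases b
    · -- b = 2
      right; right; left
      have hy2 : y = 1/2 := by norm_num at hyb; linarith
      have hz0 : z = 0 := by linarith
      rw [hx2, hy2, hz0]
    · -- b = 3
      right; right; right; left
      have hy3 : y = 1/3 := by norm_num at hyb; linarith
      have hz6 : z = 1/6 := by linarith
      rw [hx2, hy3, hz6]
    · -- b = 4
      right; right; right; right; left
      have hy4' : y = 1/4 := by norm_num at hyb; linarith
      have hz4 : z = 1/4 := by linarith
      rw [hx2, hy4', hz4]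
  · -- a = 3
    right; right; right; right; right
    have hx3' : x = 1/3 := by norm_num at hxa; linarith
    have hy3 : y = 1/3 := by linarith
    have hz3 : z = 1/3 := by linarith
    rw [hx3', hy3, hz3]

theorem stmt18 (x y z : ℚ)
    (hx : x = 0 ∨ ∃ n : ℤ, n ≠ 0 ∧ x = 1 / (n : ℚ))
    (hy : y = 0 ∨ ∃ n : ℤ, n ≠ 0 ∧ y = 1 / (n : ℚ))
    (hz : z = 0 ∨ ∃ n : ℤ, n ≠ 0 ∧ z = 1 / (n : ℚ))
    (hsum : x + y + z = 1) :
    (∃ n : ℤ, 1 ≤ n ∧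
      ({x, y, z} : Multiset ℚ) = {1, 1 / (n : ℚ), -(1 / (n : ℚ))}) ∨
    ({x, y, z} : Multiset ℚ) = {1, 0, 0} ∨
    ({x, y, z} : Multiset ℚ) = {1/2, 1/2, 0} ∨
    ({x, y, z} : Multiset ℚ) = {1/2, 1/3, 1/6} ∨
    ({x, y, z} : Multiset ℚ) = {1/2, 1/4, 1/4} ∨
    ({x, y, z} : Multiset ℚ) = {1/3, 1/3, 1/3} := by
  have perm : ∀ a b c : ℚ, ({x,y,z} : Multiset ℚ) = {a,b,c} →
      c ≤ b → b ≤ a →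
      (a = 0 ∨ ∃ n : ℤ, n ≠ 0 ∧ a = 1 / (n : ℚ)) →
      (b = 0 ∨ ∃ n : ℤ, n ≠ 0 ∧ b = 1 / (n : ℚ)) →
      (c = 0 ∨ ∃ n : ℤ, n ≠ 0 ∧ c = 1 / (n : ℚ)) →
      a + b + c = 1 →
      (∃ n : ℤ, 1 ≤ n ∧
        ({x, y, z} : Multiset ℚ) = {1, 1 / (n : ℚ), -(1 / (n : ℚ))}) ∨
      ({x, y, z} : Multiset ℚ) = {1, 0, 0} ∨
      ({x, y, z} : Multiset ℚ) = {1/2, 1/2, 0} ∨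
      ({x, y, z} : Multiset ℚ) = {1/2, 1/3, 1/6} ∨
      ({x, y, z} : Multiset ℚ) = {1/2, 1/4, 1/4} ∨
      ({x, y, z} : Multiset ℚ) = {1/3, 1/3, 1/3} := by
    intro a b c h hcb hba ha hb hc hs
    rw [h]
    exact key18 a b c hcb hba ha hb hc hs
  have s12 : ∀ a b c : ℚ, ({a,b,c} : Multiset ℚ) = {b,a,c} := by
    intro a b c
    exact Multiset.cons_swap a b {c}
  have s23 : ∀ a b c : ℚ, ({a,b,c} : Multiset ℚ) = {a,c,b} := by
    intro a b c
    show a ::ₘ b ::ₘ c ::ₘ 0 = a ::ₘ c ::ₘ b ::ₘ 0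
    rw [Multiset.cons_swap b c]
  rcases le_total x y with h1 | h1 <;> rcases le_total y z with h2 | h2 <;>
    rcases le_total x z with h3 | h3
  · exact perm z y x ((s12 x y z).trans ((s23 y x z).trans (s12 y z x))) h1 h2 hz hy hx (by linarith)
  · exact perm z y x ((s12 x y z).trans ((s23 y x z).trans (s12 y z x))) h1 h2 hz hy hx (by linarith)
  · exact perm y z x ((s12 x y z).trans (s23 y x z)) h3 h2 hy hz hx (by linarith)
  · exact perm y x z (s12 x y z) h3 h1 hy hx hz (by linarith)
  · exact perm z x y ((s23 x y z).trans (s12 x z y)) h1 h3 hz hx hy (by linarith)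
  · exact perm x z y (s23 x y z) h2 h3 hx hz hy (by linarith)
  · exact perm x y z rfl h2 h1 hx hy hz hsum
  · exact perm x y z rfl h2 h1 hx hy hz hsum
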